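/- No traditional Kochen–Specker proof from product-eigenbasis contexts: let 𝒜 be a set of self-adjoint operators on (ℂ²)^{⊗n} such that for every subset C ⊆ 𝒜 of pairwise-commuting operators there exists an orthonormal basis of (ℂ²)^{⊗n} consisting of product vectors each of which is an eigenvector of every member of C. Then there exists a map v : 𝒜 → ℝ satisfying (SPEC) v(A) belongs to the spectrum of A for every A ∈ 𝒜, and (FUNC) v(g(A)) = g(v(A)) for every A ∈ 𝒜 and every function g : ℝ → ℝ such that g(A) ∈ 𝒜, where g(A) is defined by the functional calculus (if A = Σⱼ λⱼ Πⱼ is the spectral decomposition of A, then g(A) = Σⱼ g(λⱼ) Πⱼ). -/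

import Mathlib

open scoped InnerProductSpace
open MeasureTheory

noncomputable section

abbrev Qubit : Type := EuclideanSpace ℂ (Fin 2)
abbrev NQubit (n : ℕ) : Type := EuclideanSpace ℂ (Fin n → Fin 2)

/-- The product vector `ψ₁ ⊗ ⋯ ⊗ ψₙ` in `(ℂ²)^{⊗n}`, modelled concretely as
`EuclideanSpace ℂ (Fin n → Fin 2)`; its inner products satisfy
`⟨tens ψ, tens χ⟩ = ∏ j, ⟨ψ j, χ j⟩`. -/
noncomputable def tens {n : ℕ} (ψ : Fin n → Qubit) : NQubit n :=
  WithLp.toLp 2 (fun f => ∏ j, ψ j (f j))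

/-- A vector of `(ℂ²)^{⊗n}` is a product vector if it is of the form `ψ₁ ⊗ ⋯ ⊗ ψₙ`. -/
def IsProduct {n : ℕ} (v : NQubit n) : Prop := ∃ ψ : Fin n → Qubit, v = tens ψ

/-- A finite set of vectors forming an orthonormal basis of `H`. -/
def IsONBasis {H : Type*} [NormedAddCommGroup H] [InnerProductSpace ℂ H]
    (B : Finset H) : Prop :=
  Orthonormal ℂ (fun v : B => (v : H)) ∧ Submodule.span ℂ (B : Set H) = ⊤

/-- A KS-colouring of a set `S` of unit vectors: a `{0,1}`-valued map (modelled as a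
predicate, `c v` meaning value `1`) such that every orthonormal basis contained in `S`
has exactly one element of value `1`, and no two mutually orthogonal elements of `S`
both have value `1`. -/
def IsKSColouring {H : Type*} [NormedAddCommGroup H] [InnerProductSpace ℂ H]
    (S : Set H) (c : H → Prop) : Prop :=
  (∀ B : Finset H, ↑B ⊆ S → IsONBasis B → ∃! v, v ∈ B ∧ c v) ∧
  (∀ ψ ∈ S, ∀ χ ∈ S, ⟪ψ, χ⟫_ℂ = 0 → ¬(c ψ ∧ c χ))
/-- `FunctionalOf g A B` says that `B = g(A)` in the sense of the functional calculus of
the self-adjoint operator `A`: on each eigenspace of `A` with eigenvalue `μ`, `B` acts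
as multiplication by `g μ` (for a self-adjoint operator on a finite-dimensional space,
whose eigenvectors span, this characterises `g(A) = Σⱼ g(λⱼ) Πⱼ`). -/
def FunctionalOf {n : ℕ} (g : ℝ → ℝ)
    (A B : NQubit n →ₗ[ℂ] NQubit n) : Prop :=
  ∀ (μ : ℝ) (v : NQubit n), A v = (μ : ℂ) • v → B v = ((g μ : ℝ) : ℂ) • v

namespace KSAux


def lexpos (x y z : ℝ) : Prop := 0 < x ∨ (x = 0 ∧ (0 < y ∨ (y = 0 ∧ 0 < z)))

lemma lexpos_smul {t : ℝ} (ht : 0 < t) (x y z : ℝ) :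
    lexpos (t * x) (t * y) (t * z) ↔ lexpos x y z := by
  unfold lexpos
  constructor
  · rintro (h | ⟨h1, h2 | ⟨h3, h4⟩⟩)
    · exact Or.inl (by nlinarith)
    · exact Or.inr ⟨by nlinarith, Or.inl (by nlinarith)⟩
    · exact Or.inr ⟨by nlinarith, Or.inr ⟨by nlinarith, by nlinarith⟩⟩
  · rintro (h | ⟨h1, h2 | ⟨h3, h4⟩⟩)
    · exact Or.inl (by nlinarith)
    · exact Or.inr ⟨by nlinarith, Or.inl (by nlinarith)⟩
    · exact Or.inr ⟨by nlinarith, Or.inr ⟨by nlinarith, by nlinarith⟩⟩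

lemma lexpos_neg_iff {x y z : ℝ} (h : ¬(x = 0 ∧ y = 0 ∧ z = 0)) :
    lexpos (-x) (-y) (-z) ↔ ¬ lexpos x y z := by
  unfold lexpos
  constructor
  · rintro (h1 | ⟨h1, h2 | ⟨h3, h4⟩⟩) <;> rintro (g | ⟨g1, g2 | ⟨g3, g4⟩⟩) <;> linarith
  · intro hn
    by_cases hx : 0 < x
    · exact absurd (Or.inl hx) hn
    by_cases hx0 : x = 0
    · by_cases hy : 0 < y
      · exact absurd (Or.inr ⟨hx0, Or.inl hy⟩) hn
      by_cases hy0 : y = 0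
      · by_cases hz : 0 < z
        · exact absurd (Or.inr ⟨hx0, Or.inr ⟨hy0, hz⟩⟩) hn
        · have hz0 : z ≠ 0 := fun hz0 => h ⟨hx0, hy0, hz0⟩
          exact Or.inr ⟨by linarith, Or.inr ⟨by linarith, by
            rcases lt_trichotomy z 0 with h' | h' | h' <;> first | linarith | exact absurd h' hz0⟩⟩
      · exact Or.inr ⟨by linarith, Or.inl (by
          rcases lt_trichotomy y 0 with h' | h' | h' <;> first | linarith | exact absurd h' hy0)⟩
    · exact Or.inl (by
        rcases lt_trichotomy x 0 with h' | h' | h' <;> first | linarith | exact absurd h' hx0)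

noncomputable def blochZ (ψ : Qubit) : ℝ := Complex.normSq (ψ 0) - Complex.normSq (ψ 1)
noncomputable def blochW (ψ : Qubit) : ℂ := (starRingEnd ℂ) (ψ 0) * ψ 1

def mark (ψ : Qubit) : Prop := lexpos (blochZ ψ) (blochW ψ).re (blochW ψ).im

lemma qubit_inner (ψ χ : Qubit) :
    ⟪ψ, χ⟫_ℂ = (starRingEnd ℂ) (ψ 0) * χ 0 + (starRingEnd ℂ) (ψ 1) * χ 1 := by
  simp [PiLp.inner_apply, Fin.sum_univ_two]
  ring

lemma qubit_ext_zero {ψ : Qubit} (h0 : ψ 0 = 0) (h1 : ψ 1 = 0) : ψ = 0 := by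
  ext i
  fin_cases i <;> simpa [h0, h1]

lemma qubit_ne_zero_iff {ψ : Qubit} : ψ ≠ 0 ↔ (ψ 0 ≠ 0 ∨ ψ 1 ≠ 0) := by
  constructor
  · intro h
    by_contra hc
    push_neg at hc
    exact h (qubit_ext_zero hc.1 hc.2)
  · rintro (h | h) hc <;> simp [hc] at h

lemma smul_apply' (c : ℂ) (ψ : Qubit) (i : Fin 2) : (c • ψ) i = c * ψ i := rfl

lemma bloch_ne_zero {ψ : Qubit} (h : ψ ≠ 0) :
    ¬(blochZ ψ = 0 ∧ (blochW ψ).re = 0 ∧ (blochW ψ).im = 0) := by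
  rintro ⟨hz, hre, him⟩
  have hw : blochW ψ = 0 := Complex.ext hre him
  rcases mul_eq_zero.mp hw with h0 | h1
  · have h0' : ψ 0 = 0 := by
      simpa using congrArg (starRingEnd ℂ) h0
    have h1' : ψ 1 = 0 := by
      unfold blochZ at hz
      simpa [h0'] using hz
    exact h (qubit_ext_zero h0' h1')
  · have h0' : ψ 0 = 0 := by
      unfold blochZ at hz
      simp [h1] at hz
      simpa [Complex.normSq_eq_zero] using hz
    exact h (qubit_ext_zero h0' h1)

lemma blochZ_smul (c : ℂ) (ψ : Qubit) : blochZ (c • ψ) = Complex.normSq c * blochZ ψ := by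
  simp [blochZ, smul_apply', Complex.normSq_mul, mul_sub]

lemma blochW_smul (c : ℂ) (ψ : Qubit) :
    blochW (c • ψ) = (Complex.normSq c : ℂ) * blochW ψ := by
  simp only [blochW, smul_apply', map_mul]
  rw [Complex.normSq_eq_conj_mul_self]
  ring

lemma mark_smul {c : ℂ} (hc : c ≠ 0) (ψ : Qubit) : mark (c • ψ) ↔ mark ψ := by
  have hpos : 0 < Complex.normSq c := Complex.normSq_pos.mpr hc
  have hre : (blochW (c • ψ)).re = Complex.normSq c * (blochW ψ).re := by
    rw [blochW_smul]; simp [Complex.mul_re]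
  have him : (blochW (c • ψ)).im = Complex.normSq c * (blochW ψ).im := by
    rw [blochW_smul]; simp [Complex.mul_im]
  unfold mark
  rw [blochZ_smul, hre, him]
  exact lexpos_smul hpos _ _ _

/-- standard representative of the ray orthogonal to `ψ`. -/
noncomputable def orthRep (ψ : Qubit) : Qubit :=
  WithLp.toLp 2 (fun i : Fin 2 => if i = 0 then -((starRingEnd ℂ) (ψ 1)) else (starRingEnd ℂ) (ψ 0))

lemma orthRep_apply0 (ψ : Qubit) : orthRep ψ 0 = -((starRingEnd ℂ) (ψ 1)) := rfl
lemma orthRep_apply1 (ψ : Qubit) : orthRep ψ 1 = (starRingEnd ℂ) (ψ 0) := rfl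

lemma orthRep_ne_zero {ψ : Qubit} (h : ψ ≠ 0) : orthRep ψ ≠ 0 := by
  rcases qubit_ne_zero_iff.mp h with h0 | h1
  · exact qubit_ne_zero_iff.mpr (Or.inr (by simp [orthRep_apply1, h0]))
  · exact qubit_ne_zero_iff.mpr (Or.inl (by simp [orthRep_apply0, h1]))

lemma inner_orthRep (ψ : Qubit) : ⟪ψ, orthRep ψ⟫_ℂ = 0 := by
  rw [qubit_inner, orthRep_apply0, orthRep_apply1]
  ring

/-- anything orthogonal to `ψ ≠ 0` is a multiple of `orthRep ψ`. -/
lemma perp_eq_smul_orthRep {ψ χ : Qubit} (hψ : ψ ≠ 0) (h : ⟪ψ, χ⟫_ℂ = 0) :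
    ∃ c : ℂ, χ = c • orthRep ψ := by
  rw [qubit_inner] at h
  by_cases h0 : ψ 0 = 0
  · have h1 : ψ 1 ≠ 0 := by
      rcases qubit_ne_zero_iff.mp hψ with h' | h'
      · exact absurd h0 h'
      · exact h'
    have h1c : (starRingEnd ℂ) (ψ 1) ≠ 0 := by simpa using h1
    have hχ1 : χ 1 = 0 := by
      have : (starRingEnd ℂ) (ψ 1) * χ 1 = 0 := by simpa [h0] using h
      rcases mul_eq_zero.mp this with hh | hh
      · exact absurd (by simpa using congrArg (starRingEnd ℂ) hh) h1
      · exact hh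
    refine ⟨-(χ 0) / (starRingEnd ℂ) (ψ 1), ?_⟩
    ext i
    fin_cases i
    · show χ 0 = _ * orthRep ψ 0
      rw [orthRep_apply0]
      field_simp [h1c]
    · show χ 1 = _ * orthRep ψ 1
      rw [orthRep_apply1, hχ1, h0]
      simp
  · refine ⟨χ 1 / (starRingEnd ℂ) (ψ 0), ?_⟩
    have hc0 : (starRingEnd ℂ) (ψ 0) ≠ 0 := by simpa using h0
    ext i
    fin_cases i
    · show χ 0 = _ * orthRep ψ 0
      rw [orthRep_apply0]
      have key : χ 0 * (starRingEnd ℂ) (ψ 0) = -((starRingEnd ℂ) (ψ 1)) * χ 1 := by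
        linear_combination h
      field_simp [hc0]
      linear_combination key
    · show χ 1 = _ * orthRep ψ 1
      rw [orthRep_apply1]
      exact (div_mul_cancel₀ _ hc0).symm

lemma blochZ_orthRep (ψ : Qubit) : blochZ (orthRep ψ) = -blochZ ψ := by
  simp [blochZ, orthRep_apply0, orthRep_apply1]

lemma blochW_orthRep (ψ : Qubit) : blochW (orthRep ψ) = -blochW ψ := by
  simp only [blochW, orthRep_apply0, orthRep_apply1, map_neg]
  rw [Complex.conj_conj]
  ring

lemma mark_orthRep {ψ : Qubit} (h : ψ ≠ 0) : mark (orthRep ψ) ↔ ¬ mark ψ := by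
  unfold mark
  rw [blochZ_orthRep, blochW_orthRep]
  simp only [Complex.neg_re, Complex.neg_im]
  exact lexpos_neg_iff (bloch_ne_zero h)

/-- exactly one of two orthogonal nonzero qubit vectors is marked. -/
lemma mark_exclusive {ψ χ : Qubit} (hψ : ψ ≠ 0) (hχ : χ ≠ 0) (h : ⟪ψ, χ⟫_ℂ = 0) :
    mark ψ ↔ ¬ mark χ := by
  obtain ⟨c, hc⟩ := perp_eq_smul_orthRep hψ h
  have hcne : c ≠ 0 := by
    rintro rfl
    simp at hc
    exact hχ hc
  rw [hc, mark_smul hcne, mark_orthRep hψ]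
  exact not_not.symm

/-- two qubit vectors orthogonal to the same nonzero vector are parallel. -/
lemma perp_perp_parallel {z x y : Qubit} (hz : z ≠ 0) (hx : ⟪z, x⟫_ℂ = 0)
    (hy : ⟪z, y⟫_ℂ = 0) (hxne : x ≠ 0) : ∃ c : ℂ, y = c • x := by
  obtain ⟨c, hc⟩ := perp_eq_smul_orthRep hz hx
  obtain ⟨d, hd⟩ := perp_eq_smul_orthRep hz hy
  have hcne : c ≠ 0 := by
    rintro rfl
    simp at hc
    exact hxne hc
  refine ⟨d / c, ?_⟩
  rw [hd, hc, smul_smul]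
  congr 1
  field_simp


end KSAux

section Part2

variable {n : ℕ}

lemma tens_apply (ψ : Fin n → Qubit) (f : Fin n → Fin 2) :
    tens ψ f = ∏ j, ψ j (f j) := rfl

lemma inner_tens (ψ χ : Fin n → Qubit) :
    ⟪tens ψ, tens χ⟫_ℂ = ∏ j, ⟪ψ j, χ j⟫_ℂ := by
  simp only [PiLp.inner_apply, RCLike.inner_apply, tens_apply, map_prod]
  rw [Finset.prod_univ_sum, Fintype.piFinset_univ]
  refine Finset.sum_congr rfl fun f _ => ?_
  rw [Finset.prod_mul_distrib]

lemma tens_ne_zero {ψ : Fin n → Qubit} (h : ∀ j, ψ j ≠ 0) : tens ψ ≠ 0 := by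
  have hix : ∀ j, ∃ i, ψ j i ≠ 0 := by
    intro j
    by_contra hc
    push_neg at hc
    exact h j (by ext i; simpa using hc i)
  choose f hf using hix
  intro hc
  have h0 : tens ψ f = 0 := by rw [hc]; rfl
  rw [tens_apply] at h0
  exact (Finset.prod_ne_zero_iff.mpr fun j _ => hf j) h0

lemma tens_factor_ne_zero {ψ : Fin n → Qubit} (h : tens ψ ≠ 0) (j : Fin n) : ψ j ≠ 0 := by
  intro hc
  apply h
  ext f
  show ∏ j, ψ j (f j) = 0
  exact Finset.prod_eq_zero (Finset.mem_univ j) (by rw [hc]; rfl)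

end Part2

section Part3

def Par (x y : Qubit) : Prop := ∃ c : ℂ, y = c • x

lemma par_refl (x : Qubit) : Par x x := ⟨1, (one_smul ℂ x).symm⟩

lemma par_nonzero_coeff {x y : Qubit} (h : Par x y) (hy : y ≠ 0) :
    ∃ c : ℂ, c ≠ 0 ∧ y = c • x := by
  obtain ⟨c, rfl⟩ := h
  exact ⟨c, fun h0 => hy (by rw [h0, zero_smul]), rfl⟩

def CoreStmt (n : ℕ) : Prop :=
  ∀ (ι : Type) (_ : Fintype ι) (v : ι → Fin n → Qubit),
    (∀ k j, v k j ≠ 0) →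
    (∀ k l, k ≠ l → ∃ j, ⟪v k j, v l j⟫_ℂ = 0) →
    (∀ m : ℕ, m < n → ∀ S : Finset ι,
        (∀ k ∈ S, ∀ l ∈ S, k ≠ l → ∃ j : Fin n, (j : ℕ) < m ∧ ⟪v k j, v l j⟫_ℂ = 0) →
        S.card ≤ 2 ^ m) →
    2 ^ n ≤ Fintype.card ι →
    ∃ k, ∀ j, KSAux.mark (v k j)

open KSAux in
lemma core_split (n : ℕ) (IH : CoreStmt n) (ι : Type) [inst : Fintype ι]
    (v : ι → Fin (n+1) → Qubit) (c0 d0 : Qubit)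
    (hc0 : c0 ≠ 0) (hd0 : d0 ≠ 0) (hmc : mark c0)
    (hall : ∀ k, Par c0 (v k (Fin.last n)) ∨ Par d0 (v k (Fin.last n)))
    (hnz : ∀ k j, v k j ≠ 0)
    (horth : ∀ k l, k ≠ l → ∃ j, ⟪v k j, v l j⟫_ℂ = 0)
    (hcard : ∀ m : ℕ, m < n+1 → ∀ S : Finset ι,
        (∀ k ∈ S, ∀ l ∈ S, k ≠ l → ∃ j : Fin (n+1), (j : ℕ) < m ∧ ⟪v k j, v l j⟫_ℂ = 0) →
        S.card ≤ 2 ^ m)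
    (hN : 2 ^ (n+1) ≤ Fintype.card ι) :
    ∃ k, ∀ j, mark (v k j) := by
  classical
  have same_class : ∀ (e : Qubit), e ≠ 0 → ∀ k l, k ≠ l →
      Par e (v k (Fin.last n)) → Par e (v l (Fin.last n)) →
      ∃ j : Fin (n+1), j ≠ Fin.last n ∧ ⟪v k j, v l j⟫_ℂ = 0 := by
    intro e he k l hkl hk hl
    obtain ⟨j, hj⟩ := horth k l hkl
    refine ⟨j, ?_, hj⟩
    rintro rfl
    obtain ⟨c, hc, hce⟩ := par_nonzero_coeff hk (hnz k _)
    obtain ⟨d, hd, hde⟩ := par_nonzero_coeff hl (hnz l _)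
    rw [hce, hde, inner_smul_left, inner_smul_right] at hj
    have h1 : (starRingEnd ℂ) c ≠ 0 := by simpa using hc
    exact (mul_ne_zero h1 (mul_ne_zero hd (inner_self_ne_zero.mpr he))) hj
  set Kc : Finset ι := Finset.univ.filter (fun k => Par c0 (v k (Fin.last n))) with hKc
  set Kd : Finset ι := Finset.univ.filter (fun k => ¬ Par c0 (v k (Fin.last n))) with hKd
  have hKdcard : Kd.card ≤ 2 ^ n := by
    apply hcard n (by omega)
    intro k hk l hl hkl
    have hk' : Par d0 (v k (Fin.last n)) := by
      rcases hall k with h | h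
      · exact absurd h (Finset.mem_filter.mp hk).2
      · exact h
    have hl' : Par d0 (v l (Fin.last n)) := by
      rcases hall l with h | h
      · exact absurd h (Finset.mem_filter.mp hl).2
      · exact h
    obtain ⟨j, hjne, hj⟩ := same_class d0 hd0 k l hkl hk' hl'
    exact ⟨j, Fin.val_lt_last hjne, hj⟩
  have hsplit : Kc.card + Kd.card = Fintype.card ι := by
    rw [hKc, hKd, Finset.card_filter_add_card_filter_not, Finset.card_univ]
  have hKccard : 2 ^ n ≤ Kc.card := by
    have h2 : 2 ^ (n+1) = 2 ^ n + 2 ^ n := by rw [pow_succ]; omega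
    omega
  -- apply IH to the Kc subfamily, truncated
  obtain ⟨k, hk⟩ := IH {x : ι // x ∈ Kc} inferInstance
      (fun k j => v k.1 j.castSucc)
      (fun k j => hnz k.1 _)
      (by
        intro k l hkl
        have hkl' : k.1 ≠ l.1 := fun h => hkl (Subtype.ext h)
        have hkpar : Par c0 (v k.1 (Fin.last n)) := (Finset.mem_filter.mp k.2).2
        have hlpar : Par c0 (v l.1 (Fin.last n)) := (Finset.mem_filter.mp l.2).2
        obtain ⟨j, hjne, hj⟩ := same_class c0 hc0 k.1 l.1 hkl' hkpar hlpar
        refine ⟨⟨j.1, Fin.val_lt_last hjne⟩, ?_⟩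
        have hcast : (⟨j.1, Fin.val_lt_last hjne⟩ : Fin n).castSucc = j := by
          simp [Fin.ext_iff]
        show ⟪v k.1 ((⟨j.1, Fin.val_lt_last hjne⟩ : Fin n).castSucc),
             v l.1 ((⟨j.1, Fin.val_lt_last hjne⟩ : Fin n).castSucc)⟫_ℂ = 0
        rw [hcast]
        exact hj)
      (by
        intro m hm S' hS'
        have hinj : Set.InjOn Subtype.val (S' : Set {x : ι // x ∈ Kc}) :=
          fun x _ y _ h => Subtype.ext h
        have hcardeq : (S'.image Subtype.val).card = S'.card :=
          Finset.card_image_of_injOn hinj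
        rw [← hcardeq]
        apply hcard m (by omega)
        intro k hk l hl hkl
        obtain ⟨k', hk', rfl⟩ := Finset.mem_image.mp hk
        obtain ⟨l', hl', rfl⟩ := Finset.mem_image.mp hl
        have : k' ≠ l' := fun h => hkl (by rw [h])
        obtain ⟨j, hjm, hj⟩ := hS' k' hk' l' hl' this
        refine ⟨j.castSucc, ?_, hj⟩
        simpa using hjm)
      (by rw [Fintype.card_coe]; exact hKccard)
  refine ⟨k.1, ?_⟩
  intro j
  refine Fin.lastCases ?_ ?_ j
  · obtain ⟨c, hc, hce⟩ := par_nonzero_coeff ((Finset.mem_filter.mp k.2).2) (hnz k.1 _)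
    rw [hce]
    exact (mark_smul hc c0).mpr hmc
  · intro i
    exact hk i

end Part3

open KSAux in
theorem core : ∀ n : ℕ, CoreStmt n := by
  intro n
  induction n with
  | zero =>
    intro ι inst v hnz horth hcard hN
    have hpos : 0 < Fintype.card ι := by
      have : (1:ℕ) ≤ Fintype.card ι := by simpa using hN
      omega
    obtain ⟨k⟩ := Fintype.card_pos_iff.mp hpos
    exact ⟨k, fun j => j.elim0⟩
  | succ n IH =>
    intro ι inst v hnz horth hcard hN
    classical
    -- there exist two indices whose last slots are orthogonal
    have hexists : ∃ k l, ⟪v k (Fin.last n), v l (Fin.last n)⟫_ℂ = 0 := by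
      by_contra hc
      push_neg at hc
      have hle : (Finset.univ : Finset ι).card ≤ 2 ^ n := by
        apply hcard n (by omega)
        intro k _ l _ hkl
        obtain ⟨j, hj⟩ := horth k l hkl
        have hjne : j ≠ Fin.last n := by rintro rfl; exact hc k l hj
        exact ⟨j, Fin.val_lt_last hjne, hj⟩
      rw [Finset.card_univ] at hle
      have h2 : 2 ^ (n+1) = 2 ^ n + 2 ^ n := by rw [pow_succ]; omega
      have h3 : 0 < 2 ^ n := Nat.pow_pos (by omega)
      omega
    obtain ⟨k0, l0, hab⟩ := hexists
    set a := v k0 (Fin.last n) with ha_def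
    set b := v l0 (Fin.last n) with hb_def
    have ha : a ≠ 0 := hnz k0 _
    have hb : b ≠ 0 := hnz l0 _
    have hexcl : mark a ↔ ¬ mark b := mark_exclusive ha hb hab
    -- the split case ("case A")
    have caseA : ∀ w : ι → Fin (n+1) → Qubit,
        (∀ k j, w k j ≠ 0) →
        (∀ k l, k ≠ l → ∃ j, ⟪w k j, w l j⟫_ℂ = 0) →
        (∀ m : ℕ, m < n+1 → ∀ S : Finset ι,
          (∀ k ∈ S, ∀ l ∈ S, k ≠ l → ∃ j : Fin (n+1), (j:ℕ) < m ∧ ⟪w k j, w l j⟫_ℂ = 0) →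
          S.card ≤ 2 ^ m) →
        (∀ k, Par a (w k (Fin.last n)) ∨ Par b (w k (Fin.last n))) →
        ∃ k, ∀ j, mark (w k j) := by
      intro w hnz' horth' hcard' hall
      by_cases hma : mark a
      · exact core_split n IH ι w a b ha hb hma hall hnz' horth' hcard' hN
      · have hmb : mark b := not_not.mp (mt hexcl.mpr hma)
        exact core_split n IH ι w b a hb ha hmb (fun k => (hall k).symm)
          hnz' horth' hcard' hN
    -- main induction on the number of "outside" indices
    have MAIN : ∀ M : ℕ, ∀ w : ι → Fin (n+1) → Qubit,
        (∀ k j, w k j ≠ 0) →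
        (∀ k l, k ≠ l → ∃ j, ⟪w k j, w l j⟫_ℂ = 0) →
        (∀ m : ℕ, m < n+1 → ∀ S : Finset ι,
          (∀ k ∈ S, ∀ l ∈ S, k ≠ l → ∃ j : Fin (n+1), (j:ℕ) < m ∧ ⟪w k j, w l j⟫_ℂ = 0) →
          S.card ≤ 2 ^ m) →
        (Finset.univ.filter (fun k =>
          ¬ Par a (w k (Fin.last n)) ∧ ¬ Par b (w k (Fin.last n)))).card ≤ M →
        ∃ k, ∀ j, mark (w k j) := by
      intro M
      induction M with
      | zero =>
        intro w hnz' horth' hcard' hM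
        apply caseA w hnz' horth' hcard'
        intro k
        by_contra hc
        push_neg at hc
        have hk : k ∈ Finset.univ.filter (fun k =>
            ¬ Par a (w k (Fin.last n)) ∧ ¬ Par b (w k (Fin.last n))) :=
          Finset.mem_filter.mpr ⟨Finset.mem_univ _, hc.1, hc.2⟩
        have := Finset.card_pos.mpr ⟨k, hk⟩
        omega
      | succ M' IHM =>
        intro w hnz' horth' hcard' hM
        by_cases hout : ∃ k₁, ¬ Par a (w k₁ (Fin.last n)) ∧ ¬ Par b (w k₁ (Fin.last n))
        swap
        · apply caseA w hnz' horth' hcard'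
          intro k
          by_contra hc
          push_neg at hc
          exact hout ⟨k, hc.1, hc.2⟩
        obtain ⟨k₁, hk₁a, hk₁b⟩ := hout
        set s := w k₁ (Fin.last n) with hs_def
        have hsne : s ≠ 0 := hnz' k₁ _
        -- marked and unmarked representatives of the pair {a, b}
        set am : Qubit := if mark a then a else b with ham_def
        set um : Qubit := if mark a then b else a with hum_def
        have ham : am ≠ 0 := by rw [ham_def]; split <;> assumption
        have hum : um ≠ 0 := by rw [hum_def]; split <;> assumption
        have hmam : mark am := by
          rw [ham_def]; split_ifs with h
          · exact h
          · exact not_not.mp (mt hexcl.mpr h)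
        have hmum : ¬ mark um := by
          rw [hum_def]; split_ifs with h
          · exact hexcl.mp h
          · exact h
        have hamum : ⟪am, um⟫_ℂ = 0 := by
          rw [ham_def, hum_def]; split
          · exact hab
          · exact inner_eq_zero_symm.mp hab
        have humam : ⟪um, am⟫_ℂ = 0 := inner_eq_zero_symm.mp hamum
        have ham_or : am = a ∨ am = b := by rw [ham_def]; split; exacts [Or.inl rfl, Or.inr rfl]
        have hum_or : um = a ∨ um = b := by rw [hum_def]; split; exacts [Or.inr rfl, Or.inl rfl]
        set tgt : Qubit := if mark s then am else um with htgt_def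
        set opp : Qubit := if mark s then um else am with hopp_def
        have htgt : tgt ≠ 0 := by rw [htgt_def]; split <;> assumption
        have hopp : opp ≠ 0 := by rw [hopp_def]; split <;> assumption
        have htgtopp : ⟪tgt, opp⟫_ℂ = 0 := by
          rw [htgt_def, hopp_def]; split
          · exact hamum
          · exact humam
        have hopptgt : ⟪opp, tgt⟫_ℂ = 0 := inner_eq_zero_symm.mp htgtopp
        have htgt_or : tgt = a ∨ tgt = b := by
          rw [htgt_def]; split; exacts [ham_or, hum_or]
        have hopp_or : opp = a ∨ opp = b := by
          rw [hopp_def]; split; exacts [hum_or, ham_or]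
        -- the merged family
        set nl : ι → Qubit := fun k =>
          if ⟪s, w k (Fin.last n)⟫_ℂ = 0 then opp
          else if Par s (w k (Fin.last n)) then tgt else w k (Fin.last n) with hnl_def
        set w' : ι → Fin (n+1) → Qubit := fun k j =>
          if j = Fin.last n then nl k else w k j with hw'_def
        have hw'last : ∀ k, w' k (Fin.last n) = nl k := by
          intro k; rw [hw'_def]; simp
        have hw'cast : ∀ k (j : Fin (n+1)), j ≠ Fin.last n → w' k j = w k j := by
          intro k j hj; rw [hw'_def]; simp [hj]
        have hnlO : ∀ k, ⟪s, w k (Fin.last n)⟫_ℂ = 0 → nl k = opp := by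
          intro k h; simp only [hnl_def]; rw [if_pos h]
        have hnlP : ∀ k, ¬ (⟪s, w k (Fin.last n)⟫_ℂ = 0) → Par s (w k (Fin.last n)) →
            nl k = tgt := by
          intro k h hp; simp only [hnl_def]; rw [if_neg h, if_pos hp]
        have hnlE : ∀ k, ¬ (⟪s, w k (Fin.last n)⟫_ℂ = 0) → ¬ Par s (w k (Fin.last n)) →
            nl k = w k (Fin.last n) := by
          intro k h hp; simp only [hnl_def]; rw [if_neg h, if_neg hp]
        -- k₁ itself is in the "parallel to s" class
        have hk₁P : Par s (w k₁ (Fin.last n)) := par_refl s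
        have hk₁O : ¬ (⟪s, w k₁ (Fin.last n)⟫_ℂ = 0) := by
          rw [← hs_def]; exact inner_self_ne_zero.mpr hsne
        -- nonzeroness for w'
        have hnz'' : ∀ k j, w' k j ≠ 0 := by
          intro k j
          by_cases hj : j = Fin.last n
          · subst hj
            rw [hw'last]
            by_cases hO : ⟪s, w k (Fin.last n)⟫_ℂ = 0
            · rw [hnlO k hO]; exact hopp
            · by_cases hP : Par s (w k (Fin.last n))
              · rw [hnlP k hO hP]; exact htgt
              · rw [hnlE k hO hP]; exact hnz' k _
          · rw [hw'cast _ _ hj]; exact hnz' k _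
        -- orthogonality for w'
        have horth'' : ∀ k l, k ≠ l → ∃ j, ⟪w' k j, w' l j⟫_ℂ = 0 := by
          intro k l hkl
          obtain ⟨j, hj⟩ := horth' k l hkl
          by_cases hjl : j = Fin.last n
          · subst hjl
            by_cases hOk : ⟪s, w k (Fin.last n)⟫_ℂ = 0
            · by_cases hOl : ⟪s, w l (Fin.last n)⟫_ℂ = 0
              · exfalso
                obtain ⟨c, hc⟩ := perp_perp_parallel hsne hOk hOl (hnz' k _)
                rw [hc, inner_smul_right] at hj
                rcases mul_eq_zero.mp hj with h | h
                · exact hnz' l _ (by rw [hc, h, zero_smul])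
                · exact (inner_self_ne_zero.mpr (hnz' k _)) h
              · by_cases hPl : Par s (w l (Fin.last n))
                · refine ⟨Fin.last n, ?_⟩
                  rw [hw'last, hw'last, hnlO k hOk, hnlP l hOl hPl]
                  exact hopptgt
                · exfalso
                  have h1 : ⟪w k (Fin.last n), s⟫_ℂ = 0 := inner_eq_zero_symm.mp hOk
                  obtain ⟨c, hc⟩ := perp_perp_parallel (hnz' k _) h1 hj hsne
                  exact hPl ⟨c, hc⟩
            · by_cases hPk : Par s (w k (Fin.last n))
              · by_cases hOl : ⟪s, w l (Fin.last n)⟫_ℂ = 0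
                · refine ⟨Fin.last n, ?_⟩
                  rw [hw'last, hw'last, hnlP k hOk hPk, hnlO l hOl]
                  exact htgtopp
                · by_cases hPl : Par s (w l (Fin.last n))
                  · exfalso
                    obtain ⟨c, hc, hce⟩ := par_nonzero_coeff hPk (hnz' k _)
                    obtain ⟨d, hd, hde⟩ := par_nonzero_coeff hPl (hnz' l _)
                    rw [hce, hde, inner_smul_left, inner_smul_right] at hj
                    exact (mul_ne_zero (by simpa using hc)
                      (mul_ne_zero hd (inner_self_ne_zero.mpr hsne))) hj
                  · exfalso
                    obtain ⟨c, hc, hce⟩ := par_nonzero_coeff hPk (hnz' k _)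
                    rw [hce, inner_smul_left] at hj
                    rcases mul_eq_zero.mp hj with h | h
                    · exact hc (by simpa using h)
                    · exact hOl h
              · by_cases hOl : ⟪s, w l (Fin.last n)⟫_ℂ = 0
                · exfalso
                  have h1 : ⟪w l (Fin.last n), s⟫_ℂ = 0 := inner_eq_zero_symm.mp hOl
                  have h2 : ⟪w l (Fin.last n), w k (Fin.last n)⟫_ℂ = 0 :=
                    inner_eq_zero_symm.mp hj
                  obtain ⟨c, hc⟩ := perp_perp_parallel (hnz' l _) h1 h2 hsne
                  exact hPk ⟨c, hc⟩
                · by_cases hPl : Par s (w l (Fin.last n))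
                  · exfalso
                    obtain ⟨d, hd, hde⟩ := par_nonzero_coeff hPl (hnz' l _)
                    rw [hde, inner_smul_right] at hj
                    rcases mul_eq_zero.mp hj with h | h
                    · exact hd h
                    · exact hOk (inner_eq_zero_symm.mp h)
                  · refine ⟨Fin.last n, ?_⟩
                    rw [hw'last, hw'last, hnlE k hOk hPk, hnlE l hOl hPl]
                    exact hj
          · exact ⟨j, by rw [hw'cast _ _ hjl, hw'cast _ _ hjl]; exact hj⟩
        -- cardinality bounds for w'
        have hcard'' : ∀ m : ℕ, m < n+1 → ∀ S : Finset ι,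
            (∀ k ∈ S, ∀ l ∈ S, k ≠ l →
              ∃ j : Fin (n+1), (j:ℕ) < m ∧ ⟪w' k j, w' l j⟫_ℂ = 0) →
            S.card ≤ 2 ^ m := by
          intro m hm S hS
          apply hcard' m hm S
          intro k hk l hl hkl
          obtain ⟨j, hjm, hj⟩ := hS k hk l hl hkl
          have hjne : j ≠ Fin.last n := by
            intro h
            rw [h] at hjm
            simp only [Fin.val_last] at hjm
            omega
          rw [hw'cast _ _ hjne, hw'cast _ _ hjne] at hj
          exact ⟨j, hjm, hj⟩
        -- measure decreases
        have hmeas : (Finset.univ.filter (fun k =>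
            ¬ Par a (w' k (Fin.last n)) ∧ ¬ Par b (w' k (Fin.last n)))).card ≤ M' := by
          have hsub : (Finset.univ.filter (fun k =>
              ¬ Par a (w' k (Fin.last n)) ∧ ¬ Par b (w' k (Fin.last n)))) ⊆
              (Finset.univ.filter (fun k =>
              ¬ Par a (w k (Fin.last n)) ∧ ¬ Par b (w k (Fin.last n)))).erase k₁ := by
            intro k hk
            obtain ⟨-, hka, hkb⟩ := Finset.mem_filter.mp hk
            rw [hw'last] at hka hkb
            by_cases hOk : ⟪s, w k (Fin.last n)⟫_ℂ = 0
            · rw [hnlO k hOk] at hka hkb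
              rcases hopp_or with h | h
              · exact absurd (by rw [h]; exact par_refl a) hka
              · exact absurd (by rw [h]; exact par_refl b) hkb
            · by_cases hPk : Par s (w k (Fin.last n))
              · rw [hnlP k hOk hPk] at hka hkb
                rcases htgt_or with h | h
                · exact absurd (by rw [h]; exact par_refl a) hka
                · exact absurd (by rw [h]; exact par_refl b) hkb
              · rw [hnlE k hOk hPk] at hka hkb
                refine Finset.mem_erase.mpr ⟨?_, Finset.mem_filter.mpr
                  ⟨Finset.mem_univ _, hka, hkb⟩⟩
                rintro rfl
                exact hPk hk₁P
          have hle := Finset.card_le_card hsub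
          have hk₁mem : k₁ ∈ Finset.univ.filter (fun k =>
              ¬ Par a (w k (Fin.last n)) ∧ ¬ Par b (w k (Fin.last n))) :=
            Finset.mem_filter.mpr ⟨Finset.mem_univ _, hk₁a, hk₁b⟩
          rw [Finset.card_erase_of_mem hk₁mem] at hle
          omega
        -- recurse and pull back
        obtain ⟨kst, hkst⟩ := IHM w' hnz'' horth'' hcard'' hmeas
        refine ⟨kst, ?_⟩
        intro j
        by_cases hjl : j = Fin.last n
        · subst hjl
          have hm' := hkst (Fin.last n)
          rw [hw'last] at hm'
          by_cases hOk : ⟪s, w kst (Fin.last n)⟫_ℂ = 0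
          · rw [hnlO kst hOk] at hm'
            by_cases hms : mark s
            · exfalso
              rw [hopp_def, if_pos hms] at hm'
              exact hmum hm'
            · have hiff := mark_exclusive hsne (hnz' kst _) hOk
              exact not_not.mp (mt hiff.mpr hms)
          · by_cases hPk : Par s (w kst (Fin.last n))
            · rw [hnlP kst hOk hPk] at hm'
              by_cases hms : mark s
              · obtain ⟨c, hc, hce⟩ := par_nonzero_coeff hPk (hnz' kst _)
                rw [hce]
                exact (mark_smul hc s).mpr hms
              · exfalso
                rw [htgt_def, if_neg hms] at hm'
                exact hmum hm'
            · rw [hnlE kst hOk hPk] at hm'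
              exact hm'
        · have := hkst j
          rw [hw'cast _ _ hjl] at this
          exact this
    -- start the induction with M := card ι
    apply MAIN (Fintype.card ι) v hnz horth hcard
    calc (Finset.univ.filter _).card ≤ (Finset.univ : Finset ι).card :=
          Finset.card_filter_le _ _
      _ = Fintype.card ι := Finset.card_univ

section Part4

def Marked {n : ℕ} (v : NQubit n) : Prop :=
  ∃ ψ : Fin n → Qubit, v = tens ψ ∧ ∀ j, KSAux.mark (ψ j)

open KSAux

lemma marked_not_orthogonal {n : ℕ} {v w : NQubit n} (hv : v ≠ 0) (hw : w ≠ 0)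
    (hmv : Marked v) (hmw : Marked w) : ⟪v, w⟫_ℂ ≠ 0 := by
  obtain ⟨ψ, rfl, hψ⟩ := hmv
  obtain ⟨φ, rfl, hφ⟩ := hmw
  rw [inner_tens]
  rw [Finset.prod_ne_zero_iff]
  intro j _
  intro h0
  have h1 : ψ j ≠ 0 := tens_factor_ne_zero hv j
  have h2 : φ j ≠ 0 := tens_factor_ne_zero hw j
  exact (mark_exclusive h1 h2 h0).mp (hψ j) (hφ j)

lemma basis_mem_ne_zero {n : ℕ} {Bas : Finset (NQubit n)} (hON : IsONBasis Bas)
    {v : NQubit n} (hv : v ∈ Bas) : v ≠ 0 := by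
  have h1 : ‖v‖ = 1 := hON.1.1 ⟨v, hv⟩
  intro h
  rw [h] at h1
  simp at h1

lemma exists_marked_in_basis {n : ℕ} (Bas : Finset (NQubit n)) (hON : IsONBasis Bas)
    (hprod : ∀ v ∈ Bas, IsProduct v) : ∃ v ∈ Bas, Marked v := by
  classical
  have hfac : ∀ k : {x // x ∈ Bas}, ∃ ψ : Fin n → Qubit, (k : NQubit n) = tens ψ :=
    fun k => hprod k.1 k.2
  choose F hF using hfac
  have hnzv : ∀ k : {x // x ∈ Bas}, (k : NQubit n) ≠ 0 :=
    fun k => basis_mem_ne_zero hON k.2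
  have hnz : ∀ (k : {x // x ∈ Bas}) (j : Fin n), F k j ≠ 0 := by
    intro k j
    exact tens_factor_ne_zero (fun h => hnzv k (by rw [hF k, h])) j
  have horth : ∀ k l : {x // x ∈ Bas}, k ≠ l → ∃ j, ⟪F k j, F l j⟫_ℂ = 0 := by
    intro k l hkl
    have h0 : ⟪(k : NQubit n), (l : NQubit n)⟫_ℂ = 0 := hON.1.2 hkl
    rw [hF k, hF l, inner_tens] at h0
    obtain ⟨j, _, hj⟩ := Finset.prod_eq_zero_iff.mp h0
    exact ⟨j, hj⟩
  have hcard : ∀ m : ℕ, m < n → ∀ S : Finset {x // x ∈ Bas},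
      (∀ k ∈ S, ∀ l ∈ S, k ≠ l →
        ∃ j : Fin n, (j : ℕ) < m ∧ ⟪F k j, F l j⟫_ℂ = 0) →
      S.card ≤ 2 ^ m := by
    intro m hm S hS
    have hmn : m ≤ n := le_of_lt hm
    set gg : {x // x ∈ S} → EuclideanSpace ℂ (Fin m → Fin 2) :=
      fun k => tens (fun j : Fin m => F k.1 (Fin.castLE hmn j)) with hgg
    have hli : LinearIndependent ℂ gg := by
      apply linearIndependent_of_ne_zero_of_inner_eq_zero
      · intro k
        exact tens_ne_zero (fun j => hnz k.1 _)
      · intro k l hkl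
        have hkl' : k.1 ≠ l.1 := fun h => hkl (Subtype.ext h)
        obtain ⟨j, hjm, hj⟩ := hS k.1 k.2 l.1 l.2 hkl'
        simp only [hgg]
        rw [inner_tens]
        apply Finset.prod_eq_zero (Finset.mem_univ (⟨j.1, hjm⟩ : Fin m))
        have hc : Fin.castLE hmn (⟨j.1, hjm⟩ : Fin m) = j := by
          simp [Fin.ext_iff]
        rw [hc]
        exact hj
    have hcard2 := hli.fintype_card_le_finrank
    rw [finrank_euclideanSpace] at hcard2
    simpa [Fintype.card_coe] using hcard2
  have hN : 2 ^ n ≤ Fintype.card {x // x ∈ Bas} := by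
    have h1 : Module.finrank ℂ (NQubit n) ≤ Bas.card := by
      have h2 := finrank_span_finset_le_card (R := ℂ) Bas
      rw [Set.finrank] at h2
      rw [hON.2, finrank_top] at h2
      exact h2
    have h3 : Module.finrank ℂ (NQubit n) = 2 ^ n := by
      rw [finrank_euclideanSpace]
      simp
    rw [Fintype.card_coe]
    omega
  obtain ⟨k, hk⟩ := core n {x // x ∈ Bas} inferInstance F hnz horth hcard hN
  exact ⟨k.1, k.2, F k, hF k, hk⟩

variable {n : ℕ}

lemma real_eigen {A : NQubit n →ₗ[ℂ] NQubit n}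
    (hA : ∀ x y : NQubit n, ⟪A x, y⟫_ℂ = ⟪x, A y⟫_ℂ) {v : NQubit n} {μ : ℂ}
    (hv : v ≠ 0) (h : A v = μ • v) : ∃ r : ℝ, (r : ℂ) = μ := by
  have h1 := hA v v
  rw [h, inner_smul_left, inner_smul_right] at h1
  have h2 : (starRingEnd ℂ) μ = μ :=
    mul_right_cancel₀ (inner_self_ne_zero.mpr hv) h1
  exact ⟨μ.re, (Complex.conj_eq_iff_re.mp h2)⟩

lemma marked_eigen_unique {A : NQubit n →ₗ[ℂ] NQubit n}
    (hA : ∀ x y : NQubit n, ⟪A x, y⟫_ℂ = ⟪x, A y⟫_ℂ) {v w : NQubit n} {r r' : ℝ}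
    (hv : v ≠ 0) (hw : w ≠ 0) (hmv : Marked v) (hmw : Marked w)
    (hAv : A v = (r : ℂ) • v) (hAw : A w = (r' : ℂ) • w) : r = r' := by
  by_contra hne
  have h1 : ⟪v, A w⟫_ℂ = (r' : ℂ) * ⟪v, w⟫_ℂ := by rw [hAw, inner_smul_right]
  have h2 : ⟪v, A w⟫_ℂ = (r : ℂ) * ⟪v, w⟫_ℂ := by
    rw [← hA v w, hAv, inner_smul_left, Complex.conj_ofReal]
  have h3 : ((r : ℂ) - (r' : ℂ)) * ⟪v, w⟫_ℂ = 0 := by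
    rw [sub_mul, ← h1, ← h2, sub_self]
  rcases mul_eq_zero.mp h3 with h | h
  · apply hne
    have : (r : ℂ) = (r' : ℂ) := by linear_combination h
    exact_mod_cast this
  · exact marked_not_orthogonal hv hw hmv hmw h

end Part4


/-- no traditional KS proof from product-eigenbasis contexts: if `𝒜` is a
set of self-adjoint operators on `(ℂ²)^{⊗n}` such that every pairwise-commuting subset
of `𝒜` admits a simultaneous orthonormal eigenbasis consisting of product vectors, then
there is a valuation `val : 𝒜 → ℝ` satisfying (SPEC) `val A` is an eigenvalue of `A`,
and (FUNC) `val (g(A)) = g (val A)` whenever `g : ℝ → ℝ` and `g(A) ∈ 𝒜`. -/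
theorem no_traditional_KS_proof_from_product_contexts
    (n : ℕ) (𝒜 : Set (NQubit n →ₗ[ℂ] NQubit n))
    (hsa : ∀ A ∈ 𝒜, ∀ x y : NQubit n, ⟪A x, y⟫_ℂ = ⟪x, A y⟫_ℂ)
    (hctx : ∀ C ⊆ 𝒜, (∀ A ∈ C, ∀ B ∈ C, A ∘ₗ B = B ∘ₗ A) →
      ∃ Bas : Finset (NQubit n), IsONBasis Bas ∧ (∀ v ∈ Bas, IsProduct v) ∧
        ∀ v ∈ Bas, ∀ A ∈ C, ∃ μ : ℂ, A v = μ • v) :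
    ∃ val : (NQubit n →ₗ[ℂ] NQubit n) → ℝ,
      (∀ A ∈ 𝒜, ∃ w : NQubit n, w ≠ 0 ∧ A w = ((val A : ℝ) : ℂ) • w) ∧
      (∀ A ∈ 𝒜, ∀ B ∈ 𝒜, ∀ g : ℝ → ℝ, FunctionalOf g A B → val B = g (val A)) := by
  classical
  have hsingleBasis : ∀ A ∈ 𝒜, ∃ Bas : Finset (NQubit n), IsONBasis Bas ∧
      (∀ v ∈ Bas, IsProduct v) ∧ ∀ v ∈ Bas, ∃ μ : ℂ, A v = μ • v := by
    intro A hA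
    obtain ⟨Bas, h1, h2, h3⟩ := hctx {A} (Set.singleton_subset_iff.mpr hA)
      (by
        intro X hX Y hY
        rw [Set.mem_singleton_iff] at hX hY
        subst hX; subst hY; rfl)
    exact ⟨Bas, h1, h2, fun v hv => h3 v hv A (Set.mem_singleton _)⟩
  have hsingle : ∀ A ∈ 𝒜, ∃ r : ℝ, ∃ w : NQubit n,
      w ≠ 0 ∧ Marked w ∧ A w = (r : ℂ) • w := by
    intro A hA
    obtain ⟨Bas, hON, hprod, heig⟩ := hsingleBasis A hA
    obtain ⟨v, hvBas, hvM⟩ := exists_marked_in_basis Bas hON hprod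
    have hvne : v ≠ 0 := basis_mem_ne_zero hON hvBas
    obtain ⟨μ, hμ⟩ := heig v hvBas
    obtain ⟨r, hr⟩ := real_eigen (hsa A hA) hvne hμ
    exact ⟨r, v, hvne, hvM, by rw [hμ, ← hr]⟩
  set P : (NQubit n →ₗ[ℂ] NQubit n) → ℝ → Prop := fun A r =>
    ∃ w, w ≠ 0 ∧ Marked w ∧ A w = (r : ℂ) • w with hP
  set val : (NQubit n →ₗ[ℂ] NQubit n) → ℝ := fun A =>
    if h : ∃ r, P A r then h.choose else 0 with hval
  have hvalP : ∀ A ∈ 𝒜, P A (val A) := by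
    intro A hA
    obtain ⟨r, w, h1, h2, h3⟩ := hsingle A hA
    have hex : ∃ r, P A r := ⟨r, w, h1, h2, h3⟩
    rw [hval]
    simp only [dif_pos hex]
    exact hex.choose_spec
  refine ⟨val, ?_, ?_⟩
  · intro A hA
    obtain ⟨w, h1, _, h3⟩ := hvalP A hA
    exact ⟨w, h1, h3⟩
  · intro A hA B hB g hfun
    obtain ⟨BasA, hONA, hprodA, heigA⟩ := hsingleBasis A hA
    have hcomm : A ∘ₗ B = B ∘ₗ A := by
      apply LinearMap.ext_on hONA.2
      intro x hx
      have hx' : x ∈ BasA := hx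
      have hxne : x ≠ 0 := basis_mem_ne_zero hONA hx'
      obtain ⟨μ, hμ⟩ := heigA x hx'
      obtain ⟨r, hr⟩ := real_eigen (hsa A hA) hxne hμ
      have hAx : A x = (r : ℂ) • x := by rw [hμ, ← hr]
      have hBx : B x = ((g r : ℝ) : ℂ) • x := hfun r x hAx
      simp only [LinearMap.comp_apply]
      rw [hAx, hBx, LinearMap.map_smul, LinearMap.map_smul, hAx, hBx, smul_smul, smul_smul, mul_comm]
    obtain ⟨Bas, hON, hprod, heig⟩ := hctx {A, B}
      (by
        intro X hX
        rcases Set.mem_insert_iff.mp hX with h | h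
        · rw [h]; exact hA
        · rw [Set.mem_singleton_iff.mp h]; exact hB)
      (by
        intro X hX Y hY
        rcases Set.mem_insert_iff.mp hX with h | h <;>
          rcases Set.mem_insert_iff.mp hY with h' | h'
        · rw [h, h']
        · rw [h, Set.mem_singleton_iff.mp h']; exact hcomm
        · rw [Set.mem_singleton_iff.mp h, h']; exact hcomm.symm
        · rw [Set.mem_singleton_iff.mp h, Set.mem_singleton_iff.mp h'])
    obtain ⟨v, hvBas, hvM⟩ := exists_marked_in_basis Bas hON hprod
    have hvne : v ≠ 0 := basis_mem_ne_zero hON hvBas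
    obtain ⟨μ, hμ⟩ := heig v hvBas A (Set.mem_insert _ _)
    obtain ⟨r, hr⟩ := real_eigen (hsa A hA) hvne hμ
    have hAv : A v = (r : ℂ) • v := by rw [hμ, ← hr]
    have hBv : B v = ((g r : ℝ) : ℂ) • v := hfun r v hAv
    obtain ⟨wA, hwA1, hwA2, hwA3⟩ := hvalP A hA
    obtain ⟨wB, hwB1, hwB2, hwB3⟩ := hvalP B hB
    have e1 : val A = r :=
      marked_eigen_unique (hsa A hA) hwA1 hvne hwA2 hvM hwA3 hAv
    have e2 : val B = g r :=
      marked_eigen_unique (hsa B hB) hwB1 hvne hwB2 hvM hwB3 hBv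
    rw [e1, e2]

end
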